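/- Let F and G be permutations of GF(2^n) that agree outside a nonempty finite set P ⊆ GF(2^n), and let c ∈ GF(2^n) with c ≠ 1. Then the c-differential uniformity of F is at most the c-differential uniformity of G plus the cardinality of P. -/

import Mathlib

/-- The number of solutions `x` of `F(x+a) + c·F(x) = b`. -/
noncomputable def cdCount (n : ℕ) (F : GaloisField 2 n → GaloisField 2 n)
    (c a b : GaloisField 2 n) : ℕ :=
  Nat.card {x : GaloisField 2 n // F (x + a) + c * F x = b}

/-- The `c`-differential uniformity of `F` (requiring `a ≠ 0` only when `c = 1`). -/
noncomputable def cdu (n : ℕ) (F : GaloisField 2 n → GaloisField 2 n)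
    (c : GaloisField 2 n) : ℕ :=
  sSup {k : ℕ | ∃ a b : GaloisField 2 n, (c = 1 → a ≠ 0) ∧ k = cdCount n F c a b}

lemma cdCount_le_card (n : ℕ) (F : GaloisField 2 n → GaloisField 2 n)
    (c a b : GaloisField 2 n) : cdCount n F c a b ≤ Nat.card (GaloisField 2 n) :=
  Nat.card_le_card_of_injective Subtype.val Subtype.val_injective

lemma cdCount_key (n : ℕ) (F G : GaloisField 2 n → GaloisField 2 n)
    (hF : Function.Injective F)
    (P : Finset (GaloisField 2 n))
    (hFG : ∀ x ∉ P, F x = G x)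
    (c : GaloisField 2 n) (hc : c ≠ 1) (a b : GaloisField 2 n) :
    cdCount n F c a b ≤ cdCount n G c a b + P.card := by
  classical
  set SF : Set (GaloisField 2 n) := {x | F (x + a) + c * F x = b} with hSF
  set SG : Set (GaloisField 2 n) := {x | G (x + a) + c * G x = b} with hSG
  have hcount : ∀ H : GaloisField 2 n → GaloisField 2 n,
      cdCount n H c a b = Set.ncard {x | H (x + a) + c * H x = b} := fun H =>
    Nat.card_coe_set_eq _
  rw [hcount F, hcount G, ← hSF, ← hSG]
  -- x ∈ SF \ SG implies x ∈ P or x + a ∈ P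
  have hmem : ∀ x ∈ SF \ SG, x ∈ P ∨ x + a ∈ P := by
    intro x hx
    by_contra h
    push_neg at h
    exact hx.2 (by
      have h1 := hFG x h.1
      have h2 := hFG (x + a) h.2
      simpa [hSF, hSG, ← h1, ← h2] using hx.1)
  -- injection from SF \ SG into P
  have hinj : (SF \ SG).ncard ≤ (P : Set (GaloisField 2 n)).ncard := by
    apply Set.ncard_le_ncard_of_injOn (fun x => if x ∈ P then x else x + a)
    · intro x hx
      by_cases hxP : x ∈ P
      · simpa [hxP] using hxP
      · have := (hmem x hx).resolve_left hxP
        simpa [hxP] using this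
    · intro x hx y hy h
      by_cases hxP : x ∈ P <;> by_cases hyP : y ∈ P <;> simp [hxP, hyP] at h
      · exact h
      · -- x ∈ P, y ∉ P, x = y + a
        have hya : y + a = x := h.symm
        have hxa : x + a = y := by
          rw [← hya, add_assoc, CharTwo.add_self_eq_zero, add_zero]
        have e1 : F y + c * F x = b := by
          have := hx.1; rw [hSF] at this; simpa [hxa] using this
        have e2 : F x + c * F y = b := by
          have := hy.1; rw [hSF] at this; simpa [hya] using this
        have : (1 - c) * (F x - F y) = 0 := by linear_combination e2 - e1
        rcases mul_eq_zero.mp this with h0 | h0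
        · exact absurd (by linear_combination -h0) hc
        · exact hF (by linear_combination h0)
      · -- y ∈ P, x ∉ P, x + a = y
        have hxa : x + a = y := h
        have hya : y + a = x := by
          rw [← hxa, add_assoc, CharTwo.add_self_eq_zero, add_zero]
        have e1 : F y + c * F x = b := by
          have := hx.1; rw [hSF] at this; simpa [hxa] using this
        have e2 : F x + c * F y = b := by
          have := hy.1; rw [hSF] at this; simpa [hya] using this
        have : (1 - c) * (F x - F y) = 0 := by linear_combination e2 - e1
        rcases mul_eq_zero.mp this with h0 | h0
        · exact absurd (by linear_combination -h0) hc
        · exact hF (by linear_combination h0)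
      · exact h
  calc SF.ncard = (SF ∩ SG).ncard + (SF \ SG).ncard :=
        (Set.ncard_inter_add_ncard_diff_eq_ncard SF SG (Set.toFinite _)).symm
    _ ≤ SG.ncard + P.card :=
        add_le_add (Set.ncard_le_ncard Set.inter_subset_right (Set.toFinite _))
          (by simpa [Set.ncard_coe_finset] using hinj)

theorem stmt_3 (n : ℕ) (F G : GaloisField 2 n → GaloisField 2 n)
    (hF : Function.Bijective F) (hG : Function.Bijective G)
    (P : Finset (GaloisField 2 n)) (hP : P.Nonempty)
    (hFG : ∀ x ∉ P, F x = G x)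
    (c : GaloisField 2 n) (hc : c ≠ 1) :
    cdu n F c ≤ cdu n G c + P.card := by
  have hbdd : BddAbove {k : ℕ | ∃ a b : GaloisField 2 n,
      (c = 1 → a ≠ 0) ∧ k = cdCount n G c a b} := by
    refine ⟨Nat.card (GaloisField 2 n), ?_⟩
    rintro k ⟨a, b, -, rfl⟩
    exact cdCount_le_card n G c a b
  have hne : {k : ℕ | ∃ a b : GaloisField 2 n,
      (c = 1 → a ≠ 0) ∧ k = cdCount n F c a b}.Nonempty :=
    ⟨cdCount n F c 0 0, 0, 0, fun h => absurd h hc, rfl⟩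
  apply csSup_le hne
  rintro k ⟨a, b, ha, rfl⟩
  have h1 : cdCount n F c a b ≤ cdCount n G c a b + P.card :=
    cdCount_key n F G hF.injective P hFG c hc a b
  have h2 : cdCount n G c a b ≤ cdu n G c :=
    le_csSup hbdd ⟨a, b, ha, rfl⟩
  omega
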